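/- If H is a cancellative monoid with a non-unit element a whose set of lengths contains two distinct integers k < ℓ with k > 1, then for every n ∈ ℕ the set of lengths of aⁿ contains {kn + ν(ℓ−k) : ν ∈ [0,n]}; in particular sets of lengths in H become arbitrarily large. -/

import Mathlib

/-- The set of lengths of `a`: all `n` such that `a = ε·u₁⋯u_n` for a unit `ε` and
atoms (irreducibles) `u₁, …, u_n`. -/
def LengthSet {M : Type*} [Monoid M] (a : M) : Set ℕ :=
  {n | ∃ (ε : Mˣ) (L : List M), L.length = n ∧ (∀ x ∈ L, Irreducible x) ∧ a = ε * L.prod}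

/-- Absorb the unit into the first atom: a positive length admits a unit-free
factorization. -/
lemma lengthSet_unit_free {M : Type*} [Monoid M] {a : M} {n : ℕ} (hn : 0 < n)
    (h : n ∈ LengthSet a) :
    ∃ L : List M, L.length = n ∧ (∀ x ∈ L, Irreducible x) ∧ a = L.prod := by
  obtain ⟨ε, L, hlen, hirr, heq⟩ := h
  match L, hlen with
  | [], hlen => simp at hlen; omega
  | x :: L', hlen =>
    refine ⟨(ε * x) :: L', by simpa using hlen, ?_, by simp [heq, mul_assoc]⟩
    intro y hy
    rcases List.mem_cons.mp hy with rfl | hy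
    · exact (irreducible_units_mul ε).mpr (hirr x (by simp))
    · exact hirr y (List.mem_cons_of_mem _ hy)

/-- If a non-unit `a` has two lengths `1 < k < ℓ`, then for every `n ≥ 1` the set of
lengths of `aⁿ` contains `kn + ν(ℓ - k)` for all `0 ≤ ν ≤ n`; in particular sets of
lengths become arbitrarily large. -/
theorem stmt3 {H : Type*} [CancelMonoid H] (a : H) (ha : ¬ IsUnit a)
    (k l : ℕ) (hk : 1 < k) (hkl : k < l)
    (hkmem : k ∈ LengthSet a) (hlmem : l ∈ LengthSet a) :
    ∀ n : ℕ, 0 < n → ∀ ν : ℕ, ν ≤ n → k * n + ν * (l - k) ∈ LengthSet (a ^ n) := by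
  intro n hn ν hν
  obtain ⟨M, hMlen, hMirr, hMeq⟩ := lengthSet_unit_free (by omega) hkmem
  obtain ⟨N, hNlen, hNirr, hNeq⟩ := lengthSet_unit_free (by omega) hlmem
  have key : k * n + ν * (l - k) = (n - ν) * k + ν * l := by
    have h1 : n - ν + ν = n := Nat.sub_add_cancel hν
    have h2 : k + (l - k) = l := Nat.add_sub_cancel' hkl.le
    calc k * n + ν * (l - k) = k * ((n - ν) + ν) + ν * (l - k) := by rw [h1]
      _ = (n - ν) * k + ν * (k + (l - k)) := by ring
      _ = (n - ν) * k + ν * l := by rw [h2]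
  refine ⟨1, (List.replicate (n - ν) M ++ List.replicate ν N).flatten, ?_, ?_, ?_⟩
  · simp [List.length_flatten, List.map_replicate, hMlen, hNlen, key]
  · intro x hx
    simp only [List.mem_flatten, List.mem_append, List.mem_replicate] at hx
    obtain ⟨L', hL', hxL'⟩ := hx
    rcases hL' with ⟨-, rfl⟩ | ⟨-, rfl⟩
    · exact hMirr x hxL'
    · exact hNirr x hxL'
  · simp only [Units.val_one, one_mul, List.prod_flatten, List.map_append,
      List.map_replicate, List.prod_append, List.prod_replicate, ← hMeq, ← hNeq,
      ← pow_add]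
    congr 1
    omega
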